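/- Let g be a finite-dimensional complex Lie algebra admitting a periodic prederivation P of odd order m (P^m = id, m odd). Then g is nilpotent of class at most two, i.e., [g,[g,g]] = 0. -/

import Mathlib

/-- A prederivation of a Lie algebra. -/
def IsPrederivation {L : Type*} [LieRing L] [LieAlgebra ℂ L] (P : L →ₗ[ℂ] L) : Prop :=
  ∀ x y z : L, P ⁅x, ⁅y, z⁆⁆ = ⁅P x, ⁅y, z⁆⁆ + ⁅x, ⁅P y, z⁆⁆ + ⁅x, ⁅y, P z⁆⁆

/-- If `m` is odd and `a, b, c` are `m`-th roots of unity, then `a + b + c` is not an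
`m`-th root of unity. -/
lemma no_three_roots_sum (m : ℕ) (hodd : Odd m) (a b c : ℂ)
    (ha : a ^ m = 1) (hb : b ^ m = 1) (hc : c ^ m = 1) (hs : (a + b + c) ^ m = 1) : False := by
  have hm0 : m ≠ 0 := by rintro rfl; exact (Nat.not_odd_iff_even.mpr Even.zero) hodd
  have ha0 : a ≠ 0 := by rintro rfl; simp [zero_pow hm0] at ha
  have hb0 : b ≠ 0 := by rintro rfl; simp [zero_pow hm0] at hb
  have hc0 : c ≠ 0 := by rintro rfl; simp [zero_pow hm0] at hc
  have hs0 : a + b + c ≠ 0 := by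
    intro h; rw [h, zero_pow hm0] at hs; exact zero_ne_one hs
  -- all have modulus 1, hence conjugate = inverse
  have habs : ∀ z : ℂ, z ^ m = 1 → ‖z‖ = 1 := by
    intro z hz
    have h1 : ‖z‖ ^ m = 1 := by rw [← norm_pow, hz, norm_one]
    rcases pow_eq_one_iff_cases.mp h1 with h | h | h
    · exact absurd h hm0
    · exact h
    · exfalso
      have := norm_nonneg z
      rw [h.1] at this; linarith
  have hconj : ∀ z : ℂ, z ^ m = 1 → (starRingEnd ℂ) z = z⁻¹ := by
    intro z hz
    rw [← Complex.inv_eq_conj (habs z hz)]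
  have heq : (a + b + c)⁻¹ = a⁻¹ + b⁻¹ + c⁻¹ := by
    rw [← hconj _ hs, map_add, map_add, hconj a ha, hconj b hb, hconj c hc]
  have heq2 : a * b * c = (a + b + c) * (b * c + a * c + a * b) := by
    field_simp at heq
    linear_combination heq
  have hfac : (b + c) * (a + c) * (a + b) = 0 := by linear_combination -heq2
  rcases mul_eq_zero.mp hfac with h | h
  · rcases mul_eq_zero.mp h with h | h
    · have : c = -b := eq_neg_of_add_eq_zero_right h
      rw [this, hodd.neg_pow, hb] at hc
      norm_num at hc
    · have : c = -a := eq_neg_of_add_eq_zero_right h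
      rw [this, hodd.neg_pow, ha] at hc
      norm_num at hc
  · have : b = -a := eq_neg_of_add_eq_zero_right h
    rw [this, hodd.neg_pow, ha] at hb
    norm_num at hb

theorem two_step_of_odd_periodic_prederivation (L : Type*) [LieRing L] [LieAlgebra ℂ L]
    [FiniteDimensional ℂ L] (P : L →ₗ[ℂ] L) (hP : IsPrederivation P)
    (m : ℕ) (hodd : Odd m) (hPm : P ^ m = 1) :
    ∀ x y z : L, ⁅x, ⁅y, z⁆⁆ = 0 := by
  have hm0 : m ≠ 0 := by rintro rfl; exact (Nat.not_odd_iff_even.mpr Even.zero) hodd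
  -- P is semisimple since it satisfies the squarefree polynomial X^m - 1
  have hsq : Squarefree (Polynomial.X ^ m - Polynomial.C (1 : ℂ)) :=
    (Polynomial.separable_X_pow_sub_C (1 : ℂ)
      (by exact_mod_cast (Nat.cast_ne_zero (R := ℂ)).mpr hm0) one_ne_zero).squarefree
  have haev : Polynomial.aeval P (Polynomial.X ^ m - Polynomial.C (1 : ℂ)) = 0 := by
    simp [map_sub, map_pow, hPm]
  have hss : Module.End.IsSemisimple (P : Module.End ℂ L) :=
    Module.End.isSemisimple_of_squarefree_aeval_eq_zero hsq haev
  have hfss := hss.isFinitelySemisimple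
  -- eigenspaces span
  have htop : ⨆ μ : ℂ, Module.End.eigenspace (P : Module.End ℂ L) μ = ⊤ := by
    have h1 := Module.End.iSup_maxGenEigenspace_eq_top (P : Module.End ℂ L)
    rw [← h1]
    exact iSup_congr fun μ => (hfss.maxGenEigenspace_eq_eigenspace μ).symm
  -- eigenvalues are m-th roots of unity
  have heval : ∀ (μ : ℂ) (v : L), v ≠ 0 → P v = μ • v → μ ^ m = 1 := by
    intro μ v hv hPv
    have hev : Module.End.HasEigenvector (P : Module.End ℂ L) μ v :=
      ⟨Module.End.mem_eigenspace_iff.mpr hPv, hv⟩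
    have := hev.pow_apply m
    rw [hPm] at this
    have h2 : (μ ^ m - 1) • v = 0 := by
      rw [sub_smul, one_smul, ← this]; simp
    rcases smul_eq_zero.mp h2 with h | h
    · exact sub_eq_zero.mp h
    · exact absurd h hv
  -- the bracket of eigenvectors vanishes
  have hbr : ∀ (α β γ : ℂ) (x y z : L),
      x ∈ Module.End.eigenspace (P : Module.End ℂ L) α → y ∈ Module.End.eigenspace (P : Module.End ℂ L) β →
      z ∈ Module.End.eigenspace (P : Module.End ℂ L) γ → ⁅x, ⁅y, z⁆⁆ = 0 := by
    intro α β γ x y z hx hy hz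
    rw [Module.End.mem_eigenspace_iff] at hx hy hz
    by_contra hw
    rcases eq_or_ne x 0 with rfl | hx0
    · simp at hw
    rcases eq_or_ne y 0 with rfl | hy0
    · simp at hw
    rcases eq_or_ne z 0 with rfl | hz0
    · simp at hw
    have hPw : P ⁅x, ⁅y, z⁆⁆ = (α + β + γ) • ⁅x, ⁅y, z⁆⁆ := by
      rw [hP x y z, hx, hy, hz]
      rw [smul_lie, smul_lie, lie_smul, lie_smul, lie_smul]
      rw [add_smul, add_smul]
    have hsum : (α + β + γ) ^ m = 1 := heval _ _ hw hPw
    exact no_three_roots_sum m hodd α β γ (heval α x hx0 hx) (heval β y hy0 hy)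
      (heval γ z hz0 hz) hsum
  -- extend by linearity to all of L
  have hmem : ∀ w : L, w ∈ ⨆ μ : ℂ, Module.End.eigenspace (P : Module.End ℂ L) μ := by
    intro w; rw [htop]; trivial
  -- first: x, y eigenvectors, z arbitrary
  have step1 : ∀ (α β : ℂ) (x y : L),
      x ∈ Module.End.eigenspace (P : Module.End ℂ L) α → y ∈ Module.End.eigenspace (P : Module.End ℂ L) β →
      ∀ z : L, ⁅x, ⁅y, z⁆⁆ = 0 := by
    intro α β x y hx hy z
    refine Submodule.iSup_induction (motive := fun z => ⁅x, ⁅y, z⁆⁆ = 0) _ (hmem z) ?_ ?_ ?_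
    · intro γ z hz; exact hbr α β γ x y z hx hy hz
    · simp
    · intro z₁ z₂ h1 h2; rw [lie_add, lie_add, h1, h2, add_zero]
  have step2 : ∀ (α : ℂ) (x : L), x ∈ Module.End.eigenspace (P : Module.End ℂ L) α →
      ∀ y z : L, ⁅x, ⁅y, z⁆⁆ = 0 := by
    intro α x hx y z
    refine Submodule.iSup_induction (motive := fun y => ⁅x, ⁅y, z⁆⁆ = 0) _ (hmem y) ?_ ?_ ?_
    · intro β y hy; exact step1 α β x y hx hy z
    · simp
    · intro y₁ y₂ h1 h2; rw [add_lie, lie_add, h1, h2, add_zero]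
  intro x y z
  refine Submodule.iSup_induction (motive := fun x => ⁅x, ⁅y, z⁆⁆ = 0) _ (hmem x) ?_ ?_ ?_
  · intro α x hx; exact step2 α x hx y z
  · simp
  · intro x₁ x₂ h1 h2; rw [add_lie, h1, h2, add_zero]
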